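/- Let K be a field, X a finite nonempty alphabet, G a subgroup of K×, and ℓ : G → ℝ≥0 a length function (ℓ(1) = 0, ℓ(gh) ≤ ℓ(g) + ℓ(h), ℓ(g⁻¹) = ℓ(g)) such that for every C ≥ 0 the set { g ∈ G : ℓ(g) ≤ C } is finite. Let S : X* → K be a rational series with S(w) ∈ G ∪ {0} for all w ∈ X*, and suppose S has bounded ℓ-variation: for every c ≥ 0 there exists C ≥ 0 such that for all words w, w' with S(w) ≠ 0 and S(w') ≠ 0, if there exist a word p and words w₁, w₂ with w = p·w₁, w' = p·w₂ and |w₁| + |w₂| ≤ c, then ℓ(S(w)·S(w')⁻¹) ≤ C. Then for every minimal linear representation (u, μ, v) of S, the set Ω = { u·μ(w) : w ∈ X* } ⊆ K^{1×n} is contained in a finite union of vector subspaces of dimension at most 1. -/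

import Mathlib

/-- Product of the matrices `μ x` along the word `w`. -/
def wordProd {X K : Type*} [Semiring K] {n : ℕ} (μ : X → Matrix (Fin n) (Fin n) K)
    (w : List X) : Matrix (Fin n) (Fin n) K :=
  (w.map μ).prod

/-- `(u, μ, v)` is a linear representation of the series `S : X* → K`. -/
def IsLinRep {X K : Type*} [Semiring K] {n : ℕ} (S : List X → K)
    (u : Fin n → K) (μ : X → Matrix (Fin n) (Fin n) K) (v : Fin n → K) : Prop :=
  ∀ w : List X, S w = dotProduct u (Matrix.mulVec (wordProd μ w) v)

/-- A series is rational if it admits a linear representation. -/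
def IsRational {X K : Type*} [Semiring K] (S : List X → K) : Prop :=
  ∃ (n : ℕ) (u : Fin n → K) (μ : X → Matrix (Fin n) (Fin n) K) (v : Fin n → K),
    IsLinRep S u μ v

/-- `p` is an accepting path for the word `w` in the weighted automaton associated to
`(u, μ, v)`. -/
def IsAcceptingPath {X K : Type*} [Semiring K] {n : ℕ}
    (u : Fin n → K) (μ : X → Matrix (Fin n) (Fin n) K) (v : Fin n → K)
    (w : List X) (p : Fin (w.length + 1) → Fin n) : Prop :=
  u (p 0) ≠ 0 ∧
  (∀ i : Fin w.length, μ (w.get i) (p i.castSucc) (p i.succ) ≠ 0) ∧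
  v (p (Fin.last w.length)) ≠ 0

/-- The linear representation `(u, μ, v)` is unambiguous: every word labels at most one
accepting path. -/
def IsUnambiguous {X K : Type*} [Semiring K] {n : ℕ}
    (u : Fin n → K) (μ : X → Matrix (Fin n) (Fin n) K) (v : Fin n → K) : Prop :=
  ∀ (w : List X) (p q : Fin (w.length + 1) → Fin n),
    IsAcceptingPath u μ v w p → IsAcceptingPath u μ v w q → p = q

/-- `S` is a Pólya series: its nonzero coefficients lie in a finitely generated subgroup
of `Kˣ`. -/
def IsPolya {X K : Type*} [Field K] (S : List X → K) : Prop :=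
  ∃ G : Subgroup Kˣ, G.FG ∧ ∀ w : List X, S w = 0 ∨ ∃ g ∈ G, (g : K) = S w

/-- The linear representation is deterministic: at most one initial state, and every row
of each `μ x` has at most one nonzero entry. -/
def IsDeterministic {X K : Type*} [Semiring K] {n : ℕ}
    (u : Fin n → K) (μ : X → Matrix (Fin n) (Fin n) K) : Prop :=
  (∀ i j : Fin n, u i ≠ 0 → u j ≠ 0 → i = j) ∧
  ∀ (x : X) (p q q' : Fin n), μ x p q ≠ 0 → μ x p q' ≠ 0 → q = q'

/-- Minimal linear representation: no linear representation of `S` has smaller rank. -/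
def IsMinimalRep {X K : Type*} [Semiring K] {n : ℕ} (S : List X → K)
    (u : Fin n → K) (μ : X → Matrix (Fin n) (Fin n) K) (v : Fin n → K) : Prop :=
  IsLinRep S u μ v ∧
  ∀ (m : ℕ) (u' : Fin m → K) (μ' : X → Matrix (Fin m) (Fin m) K) (v' : Fin m → K),
    IsLinRep S u' μ' v' → n ≤ m

/-- The set `Ω = {u · μ(w) : w ∈ X*}` is contained in a finite union of subspaces of
dimension at most 1, i.e. the linear hull has dimension at most 1. -/
def HullDimLE1 {X K : Type*} [Field K] {n : ℕ}
    (u : Fin n → K) (μ : X → Matrix (Fin n) (Fin n) K) : Prop :=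
  ∃ (k : ℕ) (W : Fin k → Submodule K (Fin n → K)),
    (∀ i, Module.finrank K (W i) ≤ 1) ∧
    ∀ w : List X, ∃ i, Matrix.vecMul u (wordProd μ w) ∈ W i

open Matrix in
lemma wordProd_cons {X K : Type*} [Semiring K] {n : ℕ} (μ : X → Matrix (Fin n) (Fin n) K)
    (x : X) (w : List X) : wordProd μ (x :: w) = μ x * wordProd μ w := by
  simp [wordProd]

open Matrix in
lemma wordProd_append {X K : Type*} [Semiring K] {n : ℕ} (μ : X → Matrix (Fin n) (Fin n) K)
    (w w' : List X) : wordProd μ (w ++ w') = wordProd μ w * wordProd μ w' := by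
  simp [wordProd]

open Matrix Module in
lemma span_range_top {X K : Type*} [Field K] {n : ℕ} (S : List X → K)
    (u : Fin n → K) (μ : X → Matrix (Fin n) (Fin n) K) (v : Fin n → K)
    (hmin : IsMinimalRep S u μ v) :
    Submodule.span K (Set.range fun w : List X => (wordProd μ w).mulVec v) = ⊤ := by
  classical
  by_contra hne
  set V := Submodule.span K (Set.range fun w : List X => (wordProd μ w).mulVec v) with hVdef
  have hvV : v ∈ V := Submodule.subset_span ⟨[], by simp [wordProd]⟩
  have hx : ∀ x : X, ∀ z ∈ V, (μ x).mulVecLin z ∈ V := by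
    intro x z hz
    induction hz using Submodule.span_induction with
    | mem z hz =>
      obtain ⟨w, rfl⟩ := hz
      exact Submodule.subset_span ⟨x :: w, by simp [wordProd_cons, mulVec_mulVec]⟩
    | zero => simp
    | add a b _ _ iha ihb => simpa [map_add] using V.add_mem iha ihb
    | smul c a _ iha => simpa [LinearMap.map_smul] using V.smul_mem c iha
  have hm : finrank K V < n := by
    have h1 : V < ⊤ := lt_top_iff_ne_top.mpr hne
    have := Submodule.finrank_lt (s := V) h1.ne
    rwa [finrank_fin_fun] at this
  set m := finrank K V with hmdef
  let b : Basis (Fin m) K V := Module.finBasis K V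
  let f : X → Module.End K V := fun x => ((μ x).mulVecLin).restrict (fun z hz => hx x z hz)
  let μ' : X → Matrix (Fin m) (Fin m) K := fun x => LinearMap.toMatrix b b (f x)
  let u' : Fin m → K := fun j => u ⬝ᵥ (b j : Fin n → K)
  let v' : Fin m → K := b.repr ⟨v, hvV⟩
  have key2 : ∀ w : List X, (((w.map f).prod ⟨v, hvV⟩ : V) : Fin n → K)
      = (wordProd μ w).mulVec v := by
    intro w
    induction w with
    | nil => simp [wordProd]
    | cons x w ih =>
      have h1 : ((x :: w).map f).prod = f x * (w.map f).prod := by simp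
      rw [h1, Module.End.mul_apply]
      show (((μ x).mulVecLin).restrict _ _ : Fin n → K) = _
      rw [LinearMap.restrict_coe_apply, ih]
      simp [wordProd_cons, mulVec_mulVec]
  have key1 : ∀ w : List X, wordProd μ' w = LinearMap.toMatrix b b ((w.map f).prod) := by
    intro w
    induction w with
    | nil =>
      simp only [wordProd, List.map_nil, List.prod_nil]
      rw [show (1 : Module.End K V) = LinearMap.id from rfl, LinearMap.toMatrix_id]
    | cons x w ih =>
      rw [wordProd_cons, ih]
      have : ((x :: w).map f).prod = f x * (w.map f).prod := by simp
      rw [this, LinearMap.toMatrix_mul]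
  have key3 : ∀ z : V, u' ⬝ᵥ (b.repr z : Fin m → K) = u ⬝ᵥ (z : Fin n → K) := by
    intro z
    conv_rhs => rw [← b.sum_repr z]
    have hcoe : ((∑ j, b.repr z j • b j : V) : Fin n → K)
        = ∑ j, b.repr z j • (b j : Fin n → K) := by
      simp only [Submodule.coe_sum, Submodule.coe_smul]
    rw [hcoe]
    simp only [u', dotProduct, Pi.smul_apply, smul_eq_mul, Finset.sum_apply,
      Finset.mul_sum, Finset.sum_mul]
    rw [Finset.sum_comm]
    exact Finset.sum_congr rfl fun i _ => Finset.sum_congr rfl fun j _ => by ring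
  have hrep' : IsLinRep S u' μ' v' := by
    intro w
    rw [hmin.1 w, key1]
    have h2 : (LinearMap.toMatrix b b ((w.map f).prod)) *ᵥ v'
        = b.repr (((w.map f).prod) ⟨v, hvV⟩) :=
      LinearMap.toMatrix_mulVec_repr b b _ _
    rw [h2, key3, key2]
  exact absurd (hmin.2 m u' μ' v' hrep') (not_le.mpr hm)

open Matrix Module in
theorem aux_main {K X : Type*} [Field K] [Fintype X] [Nonempty X]
    (G : Subgroup Kˣ) (ℓ : G → NNReal)
    (hfin : ∀ C : NNReal, {g : G | ℓ g ≤ C}.Finite)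
    (S : List X → K)
    (hSG : ∀ w : List X, S w = 0 ∨ ∃ g ∈ G, (g : K) = S w)
    (hbv : ∀ c : ℕ, ∃ C : NNReal, ∀ (w w' : List X) (g g' : G),
      ((g : Kˣ) : K) = S w → ((g' : Kˣ) : K) = S w' →
      (∃ p w₁ w₂ : List X, w = p ++ w₁ ∧ w' = p ++ w₂ ∧ w₁.length + w₂.length ≤ c) →
      ℓ (g * g'⁻¹) ≤ C) :
    ∀ (n : ℕ) (u : Fin n → K) (μ : X → Matrix (Fin n) (Fin n) K) (v : Fin n → K),
      IsMinimalRep S u μ v →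
      ∃ (k : ℕ) (W : Fin k → Submodule K (Fin n → K)),
        (∀ i, Module.finrank K (W i) ≤ 1) ∧
        ∀ w : List X, ∃ i, Matrix.vecMul u (wordProd μ w) ∈ W i := by
  classical
  intro n u μ v hmin
  have hspan := span_range_top S u μ v hmin
  obtain ⟨t, hts, htspan, htli⟩ :=
    exists_linearIndependent K (Set.range fun w : List X => (wordProd μ w).mulVec v)
  rw [hspan] at htspan
  let bt : Basis t K (Fin n → K) := Basis.mk htli (by rw [Subtype.range_coe]; exact htspan.ge)
  let e : t ≃ Fin n := bt.indexEquiv (Pi.basisFun K (Fin n))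
  let bb : Basis (Fin n) K (Fin n → K) := bt.reindex e
  have hB : ∀ i : Fin n, ∃ w : List X, (wordProd μ w).mulVec v = bb i := by
    intro i
    have h1 : bb i = ((e.symm i : t) : Fin n → K) := by
      simp [bb, Basis.reindex_apply, bt, Basis.mk_apply]
    have h2 := hts (e.symm i).2
    obtain ⟨w, hw⟩ := h2
    exact ⟨w, by rw [h1]; exact hw⟩
  choose y hy using hB
  let A : Matrix (Fin n) (Fin n) K := Matrix.of fun i j => bb i j
  let φ : (Fin n → K) →ₗ[K] (Fin n → K) := A.mulVecLin
  have hφinj : Function.Injective φ := by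
    rw [← LinearMap.ker_eq_bot, LinearMap.ker_eq_bot']
    intro r hr
    have hall : ∀ z : Fin n → K, z ⬝ᵥ r = 0 := by
      intro z
      have hz : z ∈ Submodule.span K (Set.range bb) := by rw [bb.span_eq]; trivial
      induction hz using Submodule.span_induction with
      | mem z hz =>
        obtain ⟨i, rfl⟩ := hz
        have h0 : A *ᵥ r = 0 := by simpa [φ, Matrix.mulVecLin_apply] using hr
        have : (A *ᵥ r) i = 0 := by rw [h0]; simp
        simpa [A, Matrix.mulVec, dotProduct] using this
      | zero => simp
      | add a b _ _ iha ihb => simp [add_dotProduct, iha, ihb]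
      | smul c a _ iha => simp [smul_dotProduct, iha]
    funext j
    have := hall (Pi.single j 1)
    rwa [single_dotProduct, one_mul] at this
  have hφbij : Function.Bijective φ := ⟨hφinj, (LinearMap.injective_iff_surjective).mp hφinj⟩
  let eφ : (Fin n → K) ≃ₗ[K] (Fin n → K) := LinearEquiv.ofBijective φ hφbij
  -- the finite set of ratios
  let c : ℕ := 2 * Finset.univ.sup (fun i => (y i).length)
  obtain ⟨C, hC⟩ := hbv c
  let Fs : Set K := insert (0 : K) ((fun g : G => ((g : Kˣ) : K)) '' {g : G | ℓ g ≤ C})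
  have hFs : Fs.Finite := Set.Finite.insert _ ((hfin C).image _)
  haveI : Fintype Fs := hFs.fintype
  let k := Fintype.card (Fin n → Fs)
  let eρ : Fin k ≃ (Fin n → Fs) := (Fintype.equivFin (Fin n → Fs)).symm
  let W : Fin k → Submodule K (Fin n → K) := fun i =>
    Submodule.map (eφ.symm : (Fin n → K) →ₗ[K] (Fin n → K))
      (Submodule.span K {fun j => ((eρ i j : K))})
  refine ⟨k, W, ?_, ?_⟩
  · intro i
    have h1 : Module.finrank K (W i)
        = Module.finrank K (Submodule.span K {fun j => ((eρ i j : K))}) :=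
      LinearEquiv.finrank_map_eq eφ.symm _
    rw [h1]
    refine le_trans (finrank_span_le_card _) ?_
    simp
  · intro w
    have hval : ∀ i, φ (Matrix.vecMul u (wordProd μ w)) i = S (w ++ y i) := by
      intro i
      show (A *ᵥ (u ᵥ* wordProd μ w)) i = _
      have h1 : (A *ᵥ (u ᵥ* wordProd μ w)) i = bb i ⬝ᵥ (u ᵥ* wordProd μ w) := rfl
      rw [h1, dotProduct_comm, ← hy i, dotProduct_mulVec, vecMul_vecMul, ← wordProd_append,
        hmin.1 (w ++ y i), dotProduct_mulVec]
    have hk : 0 < k := Fintype.card_pos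
    by_cases hz : ∀ i, S (w ++ y i) = 0
    · have h0 : φ (Matrix.vecMul u (wordProd μ w)) = 0 := by
        funext i; simp [hval i, hz i]
      have : Matrix.vecMul u (wordProd μ w) = 0 := hφinj (by rw [h0, map_zero])
      exact ⟨⟨0, hk⟩, by rw [this]; exact Submodule.zero_mem _⟩
    · push_neg at hz
      obtain ⟨i₀, hi₀⟩ := hz
      obtain ⟨g', hg'G, hg'⟩ := (hSG (w ++ y i₀)).resolve_left hi₀
      have hmemFs : ∀ i, ∃ a : Fs, S (w ++ y i) = S (w ++ y i₀) * (a : K) := by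
        intro i
        by_cases h0 : S (w ++ y i) = 0
        · exact ⟨⟨0, Set.mem_insert _ _⟩, by simp [h0]⟩
        · obtain ⟨g, hgG, hg⟩ := (hSG (w ++ y i)).resolve_left h0
          have hlen : (y i).length + (y i₀).length ≤ c := by
            have h1 : (y i).length ≤ Finset.univ.sup (fun i => (y i).length) :=
              Finset.le_sup (f := fun i => (y i).length) (Finset.mem_univ i)
            have h2 : (y i₀).length ≤ Finset.univ.sup (fun i => (y i).length) :=
              Finset.le_sup (f := fun i => (y i).length) (Finset.mem_univ i₀)
            omega
          have hle := hC (w ++ y i) (w ++ y i₀) ⟨g, hgG⟩ ⟨g', hg'G⟩ hg hg'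
            ⟨w, y i, y i₀, rfl, rfl, hlen⟩
          refine ⟨⟨(((⟨g, hgG⟩ * ⟨g', hg'G⟩⁻¹ : G) : Kˣ) : K),
            Or.inr ⟨_, hle, rfl⟩⟩, ?_⟩
          have hg'0 : (g' : K) ≠ 0 := g'.ne_zero
          rw [← hg, ← hg']
          push_cast
          field_simp
      choose ρ hρ using hmemFs
      refine ⟨eρ.symm ρ, ?_⟩
      have hWi : W (eρ.symm ρ)
          = Submodule.map (eφ.symm : (Fin n → K) →ₗ[K] (Fin n → K))
            (Submodule.span K {fun j => ((ρ j : K))}) := by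
        simp [W, Equiv.apply_symm_apply]
      rw [hWi, Submodule.mem_map_equiv]
      have heq : eφ.symm.symm (Matrix.vecMul u (wordProd μ w))
          = φ (Matrix.vecMul u (wordProd μ w)) := rfl
      rw [heq]
      have h2 : φ (Matrix.vecMul u (wordProd μ w))
          = S (w ++ y i₀) • (fun j => ((ρ j : K))) := by
        funext i
        rw [hval i, hρ i]
        simp
      rw [h2]
      exact Submodule.smul_mem _ _ (Submodule.mem_span_singleton_self _)

/-- If a rational series with values in `G ∪ {0}` has bounded `ℓ`-variation for a proper
length function `ℓ` on `G`, then the linear hull of every minimal linear representation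
has dimension at most `1`. -/
theorem bounded_variation_hull {K X : Type*} [Field K] [Fintype X] [Nonempty X]
    (G : Subgroup Kˣ) (ℓ : G → NNReal)
    (hl1 : ℓ 1 = 0) (hlmul : ∀ g h : G, ℓ (g * h) ≤ ℓ g + ℓ h)
    (hlinv : ∀ g : G, ℓ g⁻¹ = ℓ g)
    (hfin : ∀ C : NNReal, {g : G | ℓ g ≤ C}.Finite)
    (S : List X → K) (hrat : IsRational S)
    (hSG : ∀ w : List X, S w = 0 ∨ ∃ g ∈ G, (g : K) = S w)
    (hbv : ∀ c : ℕ, ∃ C : NNReal, ∀ (w w' : List X) (g g' : G),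
      ((g : Kˣ) : K) = S w → ((g' : Kˣ) : K) = S w' →
      (∃ p w₁ w₂ : List X, w = p ++ w₁ ∧ w' = p ++ w₂ ∧ w₁.length + w₂.length ≤ c) →
      ℓ (g * g'⁻¹) ≤ C) :
    ∀ (n : ℕ) (u : Fin n → K) (μ : X → Matrix (Fin n) (Fin n) K) (v : Fin n → K),
      IsMinimalRep S u μ v → HullDimLE1 u μ := by
  intro n u μ v hmin
  unfold HullDimLE1
  exact aux_main G ℓ hfin S hSG hbv n u μ v hmin
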